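/- Let θ ∈ (0,1] and let H_θ = { r·exp(iπφ) : r > 0, φ ∈ [θ, 1] } ⊂ ℂ. Then for any k ≥ 1 and any z₁, …, z_k ∈ H_θ, we have |z₁ + ⋯ + z_k| / (|z₁| + ⋯ + |z_k|) ≥ sin²(πθ/2). -/

import Mathlib

open Complex Real

/-- The sector `H_θ` of nonzero complex numbers `r·exp(iπφ)` with `r > 0`, `φ ∈ [θ, 1]`. -/
def sector (θ : ℝ) : Set ℂ :=
  {z : ℂ | ∃ r φ : ℝ, 0 < r ∧ θ ≤ φ ∧ φ ≤ 1 ∧ z = (r : ℂ) * Complex.exp (π * φ * Complex.I)}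

lemma sector_re_mul (θ : ℝ) (hθ0 : 0 < θ) (hθ1 : θ ≤ 1) (w : ℂ) (hw : w ∈ sector θ) :
    Real.sin (π * θ / 2) * ‖w‖ ≤
      (w * Complex.exp ((-(π * (1 + θ) / 2) : ℝ) * Complex.I)).re := by
  obtain ⟨r, φ, hr, hφ1, hφ2, rfl⟩ := hw
  have hπ := Real.pi_pos
  have habs : ‖(r : ℂ) * Complex.exp (π * φ * Complex.I)‖ = r := by
    rw [norm_mul]
    have : ((π * φ : ℝ) : ℂ) * Complex.I = (π * φ : ℂ) * Complex.I := by push_cast; ring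
    rw [← this, Complex.norm_exp_ofReal_mul_I, Complex.norm_real, Real.norm_eq_abs, abs_of_pos hr, mul_one]
  have hmul : (r : ℂ) * Complex.exp (π * φ * Complex.I) *
      Complex.exp ((-(π * (1 + θ) / 2) : ℝ) * Complex.I)
      = (r : ℂ) * Complex.exp (((π * φ - π * (1 + θ) / 2 : ℝ) : ℂ) * Complex.I) := by
    rw [mul_assoc, ← Complex.exp_add]
    push_cast
    ring_nf
  rw [habs, hmul]
  have hre : ((r : ℂ) * Complex.exp (((π * φ - π * (1 + θ) / 2 : ℝ) : ℂ) * Complex.I)).re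
      = r * Real.cos (π * φ - π * (1 + θ) / 2) := by
    rw [Complex.re_ofReal_mul, Complex.exp_ofReal_mul_I_re]
  rw [hre]
  have hcos : Real.sin (π * θ / 2) ≤ Real.cos (π * φ - π * (1 + θ) / 2) := by
    have h1 : Real.sin (π * θ / 2) = Real.cos (π * (1 - θ) / 2) := by
      rw [← Real.cos_pi_div_two_sub]; ring_nf
    rw [h1, ← Real.cos_abs (π * φ - π * (1 + θ) / 2)]
    apply Real.cos_le_cos_of_nonneg_of_le_pi (abs_nonneg _) (by nlinarith)
    rw [abs_le]
    constructor <;> nlinarith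
  calc Real.sin (π * θ / 2) * r ≤ Real.cos (π * φ - π * (1 + θ) / 2) * r := by
        apply mul_le_mul_of_nonneg_right hcos hr.le
    _ = r * Real.cos (π * φ - π * (1 + θ) / 2) := by ring

/-- For `θ ∈ (0,1]` and `z₁, …, z_k` in the sector `H_θ`,
`|z₁ + ⋯ + z_k| / (|z₁| + ⋯ + |z_k|) ≥ sin²(πθ/2)`. -/
theorem sector_sum_abs_ratio_ge (θ : ℝ) (hθ0 : 0 < θ) (hθ1 : θ ≤ 1)
    (k : ℕ) (hk : 1 ≤ k) (z : Fin k → ℂ) (hz : ∀ i, z i ∈ sector θ) :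
    Real.sin (π * θ / 2) ^ 2 ≤
      ‖∑ i, z i‖ / (∑ i, ‖z i‖) := by
  have hπ := Real.pi_pos
  have hsin0 : 0 ≤ Real.sin (π * θ / 2) := by
    apply Real.sin_nonneg_of_nonneg_of_le_pi <;> nlinarith
  have hsin1 : Real.sin (π * θ / 2) ≤ 1 := Real.sin_le_one _
  -- positivity of denominator
  have habs_pos : ∀ i, 0 < ‖z i‖ := by
    intro i
    obtain ⟨r, φ, hr, _, _, hzi⟩ := hz i
    rw [hzi, norm_mul]
    have : ((π * φ : ℝ) : ℂ) * Complex.I = (π * φ : ℂ) * Complex.I := by push_cast; ring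
    rw [← this, Complex.norm_exp_ofReal_mul_I, Complex.norm_real, Real.norm_eq_abs, abs_of_pos hr, mul_one]
    exact hr
  have hden : 0 < ∑ i, ‖z i‖ := by
    apply Finset.sum_pos (fun i _ => habs_pos i)
    exact Finset.univ_nonempty_iff.mpr (Fin.pos_iff_nonempty.mp hk)
  set u : ℂ := Complex.exp ((-(π * (1 + θ) / 2) : ℝ) * Complex.I) with hu
  have hkey : Real.sin (π * θ / 2) * (∑ i, ‖z i‖) ≤ ‖∑ i, z i‖ := by
    have h1 : ‖∑ i, z i‖ = ‖(∑ i, z i) * u‖ := by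
      rw [norm_mul, hu, Complex.norm_exp_ofReal_mul_I, mul_one]
    rw [h1]
    calc Real.sin (π * θ / 2) * (∑ i, ‖z i‖)
        = ∑ i, Real.sin (π * θ / 2) * ‖z i‖ := by rw [Finset.mul_sum]
      _ ≤ ∑ i, (z i * u).re := Finset.sum_le_sum (fun i _ => sector_re_mul θ hθ0 hθ1 _ (hz i))
      _ = ((∑ i, z i) * u).re := by rw [Finset.sum_mul, Complex.re_sum]
      _ ≤ ‖(∑ i, z i) * u‖ := Complex.re_le_norm _
  rw [le_div_iff₀ hden]
  calc Real.sin (π * θ / 2) ^ 2 * (∑ i, ‖z i‖)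
      ≤ Real.sin (π * θ / 2) * (∑ i, ‖z i‖) := by nlinarith [mul_nonneg (mul_nonneg (sub_nonneg.mpr hsin1) hsin0) hden.le]
    _ ≤ ‖∑ i, z i‖ := hkey
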